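/- Let (X,Σ) be a measurable space, let 𝒮 and 𝒯 be probability measures on X, let C > 0, and let C₁,…,C_N be a finite measurable partition of X with 𝒮(Cᵢ) ≥ C·𝒯(Cᵢ) for every i. Then for every positive integer m and every t > 0, the probability over a sample S = (s₁,…,s_m) drawn from the product measure 𝒮^m that Σ_{i : {s₁,…,s_m} ∩ Cᵢ = ∅} 𝒯(Cᵢ) ≥ t is at most N/(C·m·e·t), where e is Euler's number. -/

import Mathlib

open MeasureTheory

lemma real_aux_missed (C : ℝ) (hC : 0 < C) (m : ℕ) (hm : 0 < m)
    (x y : ℝ) (hy : 0 ≤ y) (hxy : C * y ≤ x) (hx1 : x ≤ 1) :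
    y * (1 - x) ^ m ≤ 1 / (C * m * Real.exp 1) := by
  have hx0 : 0 ≤ x := le_trans (by positivity) hxy
  have hu : ∀ u : ℝ, u * Real.exp (-u) ≤ Real.exp (-1) := by
    intro u
    have h := Real.add_one_le_exp (u - 1)
    calc u * Real.exp (-u) ≤ Real.exp (u - 1) * Real.exp (-u) := by
          apply mul_le_mul_of_nonneg_right (by linarith) (Real.exp_pos _).le
      _ = Real.exp (-1) := by rw [← Real.exp_add]; ring_nf
  have h1 : (1 - x) ^ m ≤ Real.exp (-x) ^ m := by
    apply pow_le_pow_left₀ (by linarith) ?_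
    have := Real.add_one_le_exp (-x); linarith
  have h2 : Real.exp (-x) ^ m = Real.exp (-((m : ℝ) * x)) := by
    rw [← Real.exp_nat_mul]; ring_nf
  have hym : 0 < (m : ℝ) := Nat.cast_pos.mpr hm
  have step1 : y * (1 - x) ^ m ≤ (x / C) * Real.exp (-((m : ℝ) * x)) := by
    have hyx : y ≤ x / C := (le_div_iff₀' hC).mpr hxy
    calc y * (1 - x) ^ m ≤ (x / C) * (1 - x) ^ m := by
          apply mul_le_mul_of_nonneg_right hyx (pow_nonneg (by linarith) m)
      _ ≤ (x / C) * Real.exp (-((m : ℝ) * x)) := by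
          rw [← h2]; exact mul_le_mul_of_nonneg_left h1 (by positivity)
  have step2 : (x / C) * Real.exp (-((m : ℝ) * x)) ≤ 1 / (C * m * Real.exp 1) := by
    have h3 := hu ((m : ℝ) * x)
    have hrw : (x / C) * Real.exp (-((m : ℝ) * x))
        = (1 / (C * m)) * ((m : ℝ) * x * Real.exp (-((m : ℝ) * x))) := by
      field_simp
    rw [hrw]
    have : (1 / (C * m)) * ((m : ℝ) * x * Real.exp (-((m : ℝ) * x)))
        ≤ (1 / (C * m)) * Real.exp (-1) := by
      apply mul_le_mul_of_nonneg_left h3 (by positivity)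
    refine this.trans (le_of_eq ?_)
    rw [Real.exp_neg]
    field_simp
  exact step1.trans step2

open scoped Classical in
/-- Under the weight-ratio condition `𝒮(Cᵢ) ≥ C·𝒯(Cᵢ)` on a finite measurable
partition, for every `t > 0` the probability over a sample `S ∼ 𝒮^m` that the total `𝒯`-mass
of missed cells is at least `t` is at most `N/(C·m·e·t)`. -/
theorem missed_mass_markov_bound {X : Type*} [MeasurableSpace X]
    (𝒮 𝒯 : Measure X) [IsProbabilityMeasure 𝒮] [IsProbabilityMeasure 𝒯]
    (C : ℝ) (hC : 0 < C) (N : ℕ) (cells : Fin N → Set X)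
    (hmeas : ∀ i, MeasurableSet (cells i))
    (hdisj : Pairwise (Function.onFun Disjoint cells))
    (hcover : (⋃ i, cells i) = Set.univ)
    (hWR : ∀ i, ENNReal.ofReal C * 𝒯 (cells i) ≤ 𝒮 (cells i))
    (m : ℕ) (hm : 0 < m) (t : ℝ) (ht : 0 < t) :
    Measure.pi (fun _ : Fin m => 𝒮)
        {S | ENNReal.ofReal t ≤ ∑ i, if ∀ j, S j ∉ cells i then 𝒯 (cells i) else 0}
      ≤ ENNReal.ofReal (N / (C * m * Real.exp 1 * t)) := by
  set μ := Measure.pi (fun _ : Fin m => 𝒮) with hμ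
  set A : Fin N → Set (Fin m → X) := fun i => {S | ∀ j, S j ∉ cells i} with hA
  have hAmeas : ∀ i, MeasurableSet (A i) := by
    intro i
    have : A i = ⋂ j, (fun S : Fin m → X => S j) ⁻¹' (cells i)ᶜ := by
      ext S; simp [hA, Set.mem_iInter]
    rw [this]
    exact MeasurableSet.iInter fun j => (measurable_pi_apply j) (hmeas i).compl
  set f : (Fin m → X) → ENNReal :=
    fun S => ∑ i, if ∀ j, S j ∉ cells i then 𝒯 (cells i) else 0 with hf
  have hfeq : ∀ S, f S = ∑ i, (A i).indicator (fun _ => 𝒯 (cells i)) S := by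
    intro S
    refine Finset.sum_congr rfl fun i _ => ?_
    by_cases h : S ∈ A i
    · simp [hf, h, Set.indicator_of_mem h, hA]; simp [hA] at h; simp [h]
    · simp [Set.indicator_of_notMem h, hf]; intro hh; exact absurd hh h
  have hfmeas : Measurable f := by
    have : f = fun S => ∑ i, (A i).indicator (fun _ => 𝒯 (cells i)) S := funext hfeq
    rw [this]
    exact Finset.measurable_sum _ fun i _ => measurable_const.indicator (hAmeas i)
  -- Markov
  have markov : μ {S | ENNReal.ofReal t ≤ f S}
      ≤ (∫⁻ S, f S ∂μ) / ENNReal.ofReal t := by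
    exact meas_ge_le_lintegral_div hfmeas.aemeasurable
      (ne_of_gt (ENNReal.ofReal_pos.mpr ht)) ENNReal.ofReal_ne_top
  -- compute the integral
  have hAmeasure : ∀ i, μ (A i) = (𝒮 (cells i)ᶜ) ^ m := by
    intro i
    have : A i = Set.pi Set.univ (fun _ : Fin m => (cells i)ᶜ) := by
      ext S; simp [hA, Set.mem_pi]
    rw [this, hμ, Measure.pi_pi]
    simp [Finset.prod_const]
  have hint : (∫⁻ S, f S ∂μ) ≤ ENNReal.ofReal (N / (C * m * Real.exp 1)) := by
    have h1 : (∫⁻ S, f S ∂μ) = ∑ i, 𝒯 (cells i) * μ (A i) := by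
      simp only [hfeq]
      rw [lintegral_finset_sum _ fun i _ => measurable_const.indicator (hAmeas i)]
      refine Finset.sum_congr rfl fun i _ => ?_
      rw [lintegral_indicator_const (hAmeas i)]
    rw [h1]
    have h2 : ∀ i : Fin N, 𝒯 (cells i) * μ (A i)
        ≤ ENNReal.ofReal (1 / (C * m * Real.exp 1)) := by
      intro i
      rw [hAmeasure i]
      set a := 𝒯 (cells i) with ha
      set b := 𝒮 (cells i) with hb
      have hbne : b ≠ ⊤ := measure_ne_top _ _
      have hane : a ≠ ⊤ := measure_ne_top _ _
      have hb1 : b ≤ 1 := prob_le_one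
      have hcompl : 𝒮 (cells i)ᶜ = 1 - b := prob_compl_eq_one_sub (hmeas i)
      rw [hcompl]
      have hx : (1 - b).toReal = 1 - b.toReal := by
        rw [ENNReal.toReal_sub_of_le hb1 ENNReal.one_ne_top, ENNReal.toReal_one]
      have hfin : a * (1 - b) ^ m ≠ ⊤ := by
        apply ENNReal.mul_ne_top hane
        exact ENNReal.pow_ne_top (ne_top_of_le_ne_top ENNReal.one_ne_top tsub_le_self)
      rw [← ENNReal.ofReal_toReal hfin]
      apply ENNReal.ofReal_le_ofReal
      rw [ENNReal.toReal_mul, ENNReal.toReal_pow, hx]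
      apply real_aux_missed C hC m hm b.toReal a.toReal ENNReal.toReal_nonneg
      · have := hWR i
        rw [← ha, ← hb] at this
        have := ENNReal.toReal_mono hbne this
        rwa [ENNReal.toReal_mul, ENNReal.toReal_ofReal hC.le] at this
      · calc b.toReal ≤ (1 : ENNReal).toReal := ENNReal.toReal_mono ENNReal.one_ne_top hb1
          _ = 1 := ENNReal.toReal_one
    calc ∑ i, 𝒯 (cells i) * μ (A i)
        ≤ ∑ _i : Fin N, ENNReal.ofReal (1 / (C * m * Real.exp 1)) :=
          Finset.sum_le_sum fun i _ => h2 i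
      _ = N * ENNReal.ofReal (1 / (C * m * Real.exp 1)) := by
          simp [Finset.sum_const, nsmul_eq_mul]
      _ = ENNReal.ofReal (N / (C * m * Real.exp 1)) := by
          rw [← ENNReal.ofReal_natCast N, ← ENNReal.ofReal_mul (by positivity)]
          ring_nf
  calc μ {S | ENNReal.ofReal t ≤ f S} ≤ (∫⁻ S, f S ∂μ) / ENNReal.ofReal t := markov
    _ ≤ ENNReal.ofReal (N / (C * m * Real.exp 1)) / ENNReal.ofReal t :=
        ENNReal.div_le_div_right hint _
    _ = ENNReal.ofReal (N / (C * m * Real.exp 1) / t) :=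
        (ENNReal.ofReal_div_of_pos ht).symm
    _ = ENNReal.ofReal (N / (C * m * Real.exp 1 * t)) := by rw [div_div]
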